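/- Let F(X) = A^T (Ω + H (Ψ + K X K^T)^{-1} H^T)^{-1} A with Ω, Ψ symmetric positive definite and A injective. For any positive definite X and α > 1, F(α^{-1}·X) ≻ α^{-1}·F(X). -/

import Mathlib

open Matrix

namespace GBPAux

variable {k : ℕ}

lemma herm_eq_transpose {M : Matrix (Fin k) (Fin k) ℝ} (h : M.IsHermitian) : Mᵀ = M := by
  rw [← conjTranspose_eq_transpose_of_trivial]; exact h

lemma dp_symm {M : Matrix (Fin k) (Fin k) ℝ} (h : Mᵀ = M) (x y : Fin k → ℝ) :
    x ⬝ᵥ M *ᵥ y = y ⬝ᵥ M *ᵥ x := by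
  rw [dotProduct_mulVec, dotProduct_comm]
  conv_lhs => rw [← h, vecMul_transpose]

lemma posdef_smul {c : ℝ} (hc : 0 < c) {M : Matrix (Fin k) (Fin k) ℝ} (hM : M.PosDef) :
    (c • M).PosDef := by
  refine posDef_iff_dotProduct_mulVec.mpr ⟨?_, fun x hx => ?_⟩
  · unfold Matrix.IsHermitian
    rw [conjTranspose_smul, hM.1, star_trivial]
  · rw [smul_mulVec, dotProduct_smul, smul_eq_mul]
    exact mul_pos hc (hM.dotProduct_mulVec_pos hx)

lemma inv_sub_inv_posdef {A B : Matrix (Fin k) (Fin k) ℝ}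
    (hA : A.PosDef) (hB : B.PosDef) (h : (A - B).PosDef) :
    (B⁻¹ - A⁻¹).PosDef := by
  have hAt : Aᵀ = A := herm_eq_transpose hA.1
  have hBt : Bᵀ = B := herm_eq_transpose hB.1
  refine posDef_iff_dotProduct_mulVec.mpr ⟨hB.inv.1.sub hA.inv.1, fun v hv => ?_⟩
  simp only [star_trivial] at *
  set w := A⁻¹ *ᵥ v with hw
  set u := B⁻¹ *ᵥ v with hu
  have hAw : A *ᵥ w = v := by
    rw [hw, mulVec_mulVec, mul_nonsing_inv _ (isUnit_iff_ne_zero.mpr hA.det_pos.ne'), one_mulVec]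
  have hBu : B *ᵥ u = v := by
    rw [hu, mulVec_mulVec, mul_nonsing_inv _ (isUnit_iff_ne_zero.mpr hB.det_pos.ne'), one_mulVec]
  have hw0 : w ≠ 0 := by
    intro h0
    apply hv
    rw [← hAw, h0, mulVec_zero]
  have expand : (u - w) ⬝ᵥ B *ᵥ (u - w)
      = u ⬝ᵥ v - w ⬝ᵥ v - (w ⬝ᵥ v - w ⬝ᵥ B *ᵥ w) := by
    rw [mulVec_sub, hBu, dotProduct_sub, sub_dotProduct, sub_dotProduct]
    rw [dp_symm hBt u w, hBu]
  have hpsd : 0 ≤ (u - w) ⬝ᵥ B *ᵥ (u - w) := by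
    simpa using hB.posSemidef.dotProduct_mulVec_nonneg (u - w)
  have hlt : w ⬝ᵥ B *ᵥ w < w ⬝ᵥ A *ᵥ w := by
    have := h.dotProduct_mulVec_pos hw0
    rw [star_trivial, sub_mulVec, dotProduct_sub] at this
    linarith
  have hwv : w ⬝ᵥ A *ᵥ w = w ⬝ᵥ v := by rw [hAw]
  have goal_eq : v ⬝ᵥ (B⁻¹ - A⁻¹) *ᵥ v = u ⬝ᵥ v - w ⬝ᵥ v := by
    rw [sub_mulVec, dotProduct_sub, ← hu, ← hw,
      dotProduct_comm v u, dotProduct_comm v w]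
  rw [goal_eq]
  rw [expand] at hpsd
  linarith

lemma inv_sub_inv_possemidef {A B : Matrix (Fin k) (Fin k) ℝ}
    (hA : A.PosDef) (hB : B.PosDef) (h : (A - B).PosSemidef) :
    (B⁻¹ - A⁻¹).PosSemidef := by
  have hAt : Aᵀ = A := herm_eq_transpose hA.1
  have hBt : Bᵀ = B := herm_eq_transpose hB.1
  refine posSemidef_iff_dotProduct_mulVec.mpr ⟨hB.inv.1.sub hA.inv.1, fun v => ?_⟩
  simp only [star_trivial] at *
  set w := A⁻¹ *ᵥ v with hw
  set u := B⁻¹ *ᵥ v with hu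
  have hAw : A *ᵥ w = v := by
    rw [hw, mulVec_mulVec, mul_nonsing_inv _ (isUnit_iff_ne_zero.mpr hA.det_pos.ne'), one_mulVec]
  have hBu : B *ᵥ u = v := by
    rw [hu, mulVec_mulVec, mul_nonsing_inv _ (isUnit_iff_ne_zero.mpr hB.det_pos.ne'), one_mulVec]
  have expand : (u - w) ⬝ᵥ B *ᵥ (u - w)
      = u ⬝ᵥ v - w ⬝ᵥ v - (w ⬝ᵥ v - w ⬝ᵥ B *ᵥ w) := by
    rw [mulVec_sub, hBu, dotProduct_sub, sub_dotProduct, sub_dotProduct]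
    rw [dp_symm hBt u w, hBu]
  have hpsd : 0 ≤ (u - w) ⬝ᵥ B *ᵥ (u - w) := by
    simpa using hB.posSemidef.dotProduct_mulVec_nonneg (u - w)
  have hle : w ⬝ᵥ B *ᵥ w ≤ w ⬝ᵥ A *ᵥ w := by
    have := h.dotProduct_mulVec_nonneg w
    rw [star_trivial, sub_mulVec, dotProduct_sub] at this
    linarith
  have hwv : w ⬝ᵥ A *ᵥ w = w ⬝ᵥ v := by rw [hAw]
  have goal_eq : v ⬝ᵥ (B⁻¹ - A⁻¹) *ᵥ v = u ⬝ᵥ v - w ⬝ᵥ v := by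
    rw [sub_mulVec, dotProduct_sub, ← hu, ← hw,
      dotProduct_comm v u, dotProduct_comm v w]
  rw [goal_eq]
  rw [expand] at hpsd
  linarith

lemma conj_posdef {m n : ℕ} {D : Matrix (Fin m) (Fin m) ℝ} (hD : D.PosDef)
    (A : Matrix (Fin m) (Fin n) ℝ) (hA : ∀ v : Fin n → ℝ, A.mulVec v = 0 → v = 0) :
    (Aᵀ * D * A).PosDef := by
  have hDt : Dᵀ = D := herm_eq_transpose hD.1
  refine posDef_iff_dotProduct_mulVec.mpr ⟨?_, fun v hv => ?_⟩
  · unfold Matrix.IsHermitian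
    rw [conjTranspose_eq_transpose_of_trivial, transpose_mul, transpose_mul,
      transpose_transpose, hDt, ← Matrix.mul_assoc]
  · have hAv : A *ᵥ v ≠ 0 := fun h0 => hv (hA v h0)
    have : v ⬝ᵥ (Aᵀ * D * A) *ᵥ v = (A *ᵥ v) ⬝ᵥ D *ᵥ (A *ᵥ v) := by
      rw [← mulVec_mulVec, ← mulVec_mulVec, dotProduct_mulVec v, vecMul_transpose]
    rw [star_trivial, this]
    exact (by simpa only [star_trivial] using hD.dotProduct_mulVec_pos hAv)

lemma transpose_psd {p q : ℕ} {M : Matrix (Fin q) (Fin q) ℝ} (hM : M.PosSemidef)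
    (K : Matrix (Fin p) (Fin q) ℝ) : (K * M * Kᵀ).PosSemidef := by
  have := hM.mul_mul_conjTranspose_same K
  rwa [conjTranspose_eq_transpose_of_trivial] at this

end GBPAux

open GBPAux

/-- Strict subhomogeneity (inverse form): for F(X) = Aᵀ (Ω + H (Ψ + K X Kᵀ)⁻¹ Hᵀ)⁻¹ A
with A injective, X ≻ 0 and α > 1, one has F(α⁻¹ • X) ≻ α⁻¹ • F(X). -/
theorem gbp_update_strict_subhom_inv {n m p q : ℕ}
    (A : Matrix (Fin m) (Fin n) ℝ) (Ω : Matrix (Fin m) (Fin m) ℝ)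
    (H : Matrix (Fin m) (Fin p) ℝ) (Ψ : Matrix (Fin p) (Fin p) ℝ)
    (K : Matrix (Fin p) (Fin q) ℝ)
    (hΩ : Ω.PosDef) (hΨ : Ψ.PosDef)
    (hA : ∀ v : Fin n → ℝ, A.mulVec v = 0 → v = 0)
    (X : Matrix (Fin q) (Fin q) ℝ) (hX : X.PosDef)
    (α : ℝ) (hα : 1 < α) :
    ((Aᵀ * (Ω + H * (Ψ + K * (α⁻¹ • X) * Kᵀ)⁻¹ * Hᵀ)⁻¹ * A)
      - α⁻¹ • (Aᵀ * (Ω + H * (Ψ + K * X * Kᵀ)⁻¹ * Hᵀ)⁻¹ * A)).PosDef := by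
  have hα0 : (0:ℝ) < α := lt_trans one_pos hα
  have hαinv : (0:ℝ) < α⁻¹ := inv_pos.mpr hα0
  have hαinv1 : α⁻¹ < 1 := by
    rw [inv_lt_one_iff₀]; right; exact hα
  set S1 := Ψ + K * X * Kᵀ with hS1
  set S2 := Ψ + K * (α⁻¹ • X) * Kᵀ with hS2
  have hS1pd : S1.PosDef := hΨ.add_posSemidef (transpose_psd hX.posSemidef K)
  have hS2pd : S2.PosDef :=
    hΨ.add_posSemidef (transpose_psd (posdef_smul hαinv hX).posSemidef K)
  have hS1smul : (α⁻¹ • S1).PosDef := posdef_smul hαinv hS1pd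
  -- inner comparison : S2 - α⁻¹ • S1 = (1 - α⁻¹) • Ψ
  have hinner_eq : S2 - α⁻¹ • S1 = (1 - α⁻¹) • Ψ := by
    rw [hS1, hS2, Matrix.mul_smul, Matrix.smul_mul]
    module
  have hinner : (S2 - α⁻¹ • S1).PosSemidef := by
    rw [hinner_eq]
    exact (posdef_smul (by linarith) hΨ).posSemidef
  have hpsd2 : ((α⁻¹ • S1)⁻¹ - S2⁻¹).PosSemidef :=
    inv_sub_inv_possemidef hS2pd hS1smul hinner
  -- (α⁻¹ • S1)⁻¹ = α • S1⁻¹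
  have hS1det : IsUnit S1.det := isUnit_iff_ne_zero.mpr hS1pd.det_pos.ne'
  have hsmulinv : (α⁻¹ • S1)⁻¹ = α • S1⁻¹ := by
    refine inv_eq_left_inv ?_
    rw [Matrix.smul_mul, Matrix.mul_smul, smul_smul, mul_inv_cancel₀ hα0.ne',
      one_smul, nonsing_inv_mul _ hS1det]
  rw [hsmulinv] at hpsd2
  set M1 := Ω + H * S1⁻¹ * Hᵀ with hM1
  set M2 := Ω + H * S2⁻¹ * Hᵀ with hM2
  have hM1pd : M1.PosDef := hΩ.add_posSemidef (transpose_psd hS1pd.inv.posSemidef H)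
  have hM2pd : M2.PosDef := hΩ.add_posSemidef (transpose_psd hS2pd.inv.posSemidef H)
  have hM1smul : (α • M1).PosDef := posdef_smul hα0 hM1pd
  have houter_eq : α • M1 - M2 = (α - 1) • Ω + H * (α • S1⁻¹ - S2⁻¹) * Hᵀ := by
    rw [hM1, hM2, Matrix.mul_sub, Matrix.sub_mul, Matrix.mul_smul, Matrix.smul_mul]
    module
  have houter : (α • M1 - M2).PosDef := by
    rw [houter_eq]
    exact (posdef_smul (by linarith) hΩ).add_posSemidef (transpose_psd hpsd2 H)
  have hD : (M2⁻¹ - (α • M1)⁻¹).PosDef := inv_sub_inv_posdef hM1smul hM2pd houter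
  have hM1det : IsUnit M1.det := isUnit_iff_ne_zero.mpr hM1pd.det_pos.ne'
  have hsmulinv2 : (α • M1)⁻¹ = α⁻¹ • M1⁻¹ := by
    refine inv_eq_left_inv ?_
    rw [Matrix.smul_mul, Matrix.mul_smul, smul_smul, inv_mul_cancel₀ hα0.ne',
      one_smul, nonsing_inv_mul _ hM1det]
  rw [hsmulinv2] at hD
  have final_eq : (Aᵀ * M2⁻¹ * A) - α⁻¹ • (Aᵀ * M1⁻¹ * A)
      = Aᵀ * (M2⁻¹ - α⁻¹ • M1⁻¹) * A := by
    simp only [Matrix.mul_sub, Matrix.sub_mul, Matrix.mul_smul, Matrix.smul_mul]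
  rw [final_eq]
  exact conj_posdef hD A hA
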